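/- arXiv:1211.5491 — 7 statements merged into one kernel-verified Lean document; each statement's English description precedes it below -/
import Mathlib

section
/- Let C ⊆ ℝⁿ be compact convex containing 0 in its interior, with polar C°. Fix a unit vector s and suppose the problem max_{y ∈ C} ⟨s, y⟩ has two distinct maximizers x₀ ≠ x₁. Then the function ξ ↦ τ(s + ξ(x₁ − x₀)), where τ(w) = max{τ > 0 : τw ∈ C°}, has distinct one-sided derivatives at ξ = 0; in particular τ is not Gâteaux differentiable at s. -/
/-!
Writing `σ` for the support function of `C`, the polar satisfies `τ w = (σ w)⁻¹`, so along the
line, `g = h⁻¹` with `h ξ = σ (s + ξ • v)`, `v = x₁ - x₀`, a convex function with one-sided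
derivatives. Each maximizer `xᵢ` gives a supporting line `ξ ↦ ⟪s + ξ • v, xᵢ⟫` of `h` at `0`,
and their slopes differ by `⟪v, x₁⟫ - ⟪v, x₀⟫ = ‖v‖² > 0`. Hence
`h'₋(0) ≤ ⟪v, x₀⟫ < ⟪v, x₁⟫ ≤ h'₊(0)`, and inverting the positive value `h 0 = σ s` turns this
kink of `h` into the reversed kink of `g`.
-/

open scoped RealInnerProductSpace

open Set Filter Topology

section SupportFunction

variable {E : Type*} [NormedAddCommGroup E] [InnerProductSpace ℝ E] {C : Set E} {w y z : E}

noncomputable def supportFun (C : Set E) (w : E) : ℝ :=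
  sSup ((fun y => ⟪w, y⟫) '' C)

lemma inner_le_supportFun (hC : IsCompact C) (hy : y ∈ C) : ⟪w, y⟫ ≤ supportFun C w :=
  le_csSup ((hC.image (continuous_const.inner continuous_id)).bddAbove) ⟨y, hy, rfl⟩

lemma supportFun_eq_inner (hz : z ∈ C) (hmax : ∀ y ∈ C, ⟪w, y⟫ ≤ ⟪w, z⟫) :
    supportFun C w = ⟪w, z⟫ :=
  IsGreatest.csSup_eq ⟨⟨z, hz, rfl⟩, by rintro _ ⟨y, hy, rfl⟩; exact hmax y hy⟩

lemma IsCompact.exists_supportFun_eq_inner (hC : IsCompact C) (hne : C.Nonempty) (w : E) :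
    ∃ z ∈ C, supportFun C w = ⟪w, z⟫ := by
  obtain ⟨z, hz, hmax⟩ :=
    hC.exists_isMaxOn hne (continuous_const.inner (𝕜 := ℝ) continuous_id).continuousOn
  exact ⟨z, hz, supportFun_eq_inner hz fun y hy => hmax hy⟩

lemma supportFun_nonneg (hC : IsCompact C) (h0 : (0 : E) ∈ C) : 0 ≤ supportFun C w :=
  (inner_zero_right w).symm.le.trans (inner_le_supportFun hC h0)

lemma supportFun_pos (hC : IsCompact C) (h0 : (0 : E) ∈ interior C) (hw : w ≠ 0) :
    0 < supportFun C w := by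
  obtain ⟨t, htC, ht⟩ : ∃ t : ℝ, t • w ∈ C ∧ 0 < t := by
    have hnear : ∀ᶠ t : ℝ in 𝓝 0, t • w ∈ C :=
      ((continuous_id.smul continuous_const).tendsto' (0 : ℝ) 0 (zero_smul ℝ w)).eventually
        (mem_interior_iff_mem_nhds.1 h0)
    exact ((hnear.filter_mono nhdsWithin_le_nhds).and
      (self_mem_nhdsWithin : Ioi (0 : ℝ) ∈ 𝓝[>] 0)).exists
  calc 0 < t * ‖w‖ ^ 2 := by positivity
    _ = ⟪w, t • w⟫ := by rw [real_inner_smul_right, real_inner_self_eq_norm_sq]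
    _ ≤ supportFun C w := inner_le_supportFun hC htC

lemma convexOn_supportFun (hC : IsCompact C) : ConvexOn ℝ univ (supportFun C) := by
  refine ⟨convex_univ, fun u _ u' _ a b ha hb hab => ?_⟩
  rcases C.eq_empty_or_nonempty with rfl | hne
  · simp [supportFun]
  obtain ⟨z, hz, hσ⟩ := hC.exists_supportFun_eq_inner hne (a • u + b • u')
  rw [hσ, inner_add_left, real_inner_smul_left, real_inner_smul_left, smul_eq_mul, smul_eq_mul]
  gcongr <;> exact inner_le_supportFun hC hz

/-- When `supportFun C w = 0` the set of `t` is all of `Ioi 0`, and the junk values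
`sSup (Ioi 0) = 0 = 0⁻¹` agree. -/
lemma sSup_smul_mem_polar_eq_inv_supportFun (hC : IsCompact C) (h0 : (0 : E) ∈ C) (w : E) :
    sSup {t : ℝ | 0 < t ∧ t • w ∈ {u : E | ∀ y ∈ C, ⟪u, y⟫ ≤ 1}} = (supportFun C w)⁻¹ := by
  obtain ⟨z, hz, hσ⟩ := hC.exists_supportFun_eq_inner ⟨0, h0⟩ w
  have hmem : ∀ t : ℝ, 0 < t →
      (t • w ∈ {u : E | ∀ y ∈ C, ⟪u, y⟫ ≤ 1} ↔ t * supportFun C w ≤ 1) := by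
    intro t ht
    simp only [mem_ofPred_eq, real_inner_smul_left]
    refine ⟨fun h => hσ ▸ h z hz, fun h y hy => ?_⟩
    exact (mul_le_mul_of_nonneg_left (inner_le_supportFun hC hy) ht.le).trans h
  rcases (supportFun_nonneg hC h0 (w := w)).eq_or_lt with hzero | hpos
  · have : {t : ℝ | 0 < t ∧ t • w ∈ {u : E | ∀ y ∈ C, ⟪u, y⟫ ≤ 1}} = Ioi 0 := by
      ext t
      refine and_iff_left_of_imp fun ht => (hmem t ht).2 ?_
      rw [← hzero, mul_zero]
      exact zero_le_one
    rw [this, ← hzero, inv_zero, Real.sSup_of_not_bddAbove (not_bddAbove_Ioi 0)]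
  · have : {t : ℝ | 0 < t ∧ t • w ∈ {u : E | ∀ y ∈ C, ⟪u, y⟫ ≤ 1}} =
        Ioc 0 (supportFun C w)⁻¹ := by
      ext t
      exact and_congr_right fun ht => (hmem t ht).trans (by rw [inv_eq_one_div, le_div_iff₀ hpos])
    rw [this, csSup_Ioc (inv_pos.2 hpos)]

lemma convexOn_supportFun_comp_line (hC : IsCompact C) (s v : E) :
    ConvexOn ℝ univ fun ξ : ℝ => supportFun C (s + ξ • v) := by
  have hline : (fun ξ : ℝ => s + ξ • v) = AffineMap.lineMap s (s + v) := by
    ext ξ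
    rw [AffineMap.lineMap_apply_module', add_sub_cancel_left, add_comm]
  change ConvexOn ℝ univ (supportFun C ∘ fun ξ : ℝ => s + ξ • v)
  rw [hline, ← preimage_univ (f := AffineMap.lineMap s (s + v))]
  exact (convexOn_supportFun hC).comp_affineMap _

lemma supportFun_add_mul_inner_le {s x : E} (hC : IsCompact C) (hx : x ∈ C)
    (hmax : ∀ y ∈ C, ⟪s, y⟫ ≤ ⟪s, x⟫) (v : E) (ξ : ℝ) :
    supportFun C s + ⟪v, x⟫ * ξ ≤ supportFun C (s + ξ • v) := by
  rw [supportFun_eq_inner hx hmax, mul_comm, ← real_inner_smul_left, ← inner_add_left]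
  exact inner_le_supportFun hC hx

end SupportFunction

section OneSidedDeriv

variable {f : ℝ → ℝ} {f' m x : ℝ}

lemma HasDerivWithinAt.le_of_supporting_line_Ici (hf : HasDerivWithinAt f f' (Ici x) x)
    (hline : ∀ y, x < y → f x + m * (y - x) ≤ f y) : m ≤ f' := by
  rw [← hasDerivWithinAt_Ioi_iff_Ici, hasDerivWithinAt_iff_tendsto_slope' self_notMem_Ioi] at hf
  refine ge_of_tendsto hf (eventually_nhdsWithin_of_forall fun y (hy : x < y) => ?_)
  rw [slope_def_field, le_div_iff₀ (sub_pos.2 hy)]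
  linarith [hline y hy]

lemma HasDerivWithinAt.le_of_supporting_line_Iic (hf : HasDerivWithinAt f f' (Iic x) x)
    (hline : ∀ y, y < x → f x + m * (y - x) ≤ f y) : f' ≤ m := by
  rw [← hasDerivWithinAt_Iio_iff_Iic, hasDerivWithinAt_iff_tendsto_slope' self_notMem_Iio] at hf
  refine le_of_tendsto hf (eventually_nhdsWithin_of_forall fun y (hy : y < x) => ?_)
  rw [slope_def_field, div_le_iff_of_neg (sub_neg.2 hy)]
  linarith [hline y hy]

lemma not_differentiableAt_of_hasDerivWithinAt_Ici_Iic {F : Type*} [NormedAddCommGroup F]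
    [NormedSpace ℝ F] {g : ℝ → F} {a b : F} (ha : HasDerivWithinAt g a (Ici x) x)
    (hb : HasDerivWithinAt g b (Iic x) x) (hab : a ≠ b) : ¬ DifferentiableAt ℝ g x := by
  intro hg
  exact hab <| ((uniqueDiffWithinAt_Ici x).eq_deriv _ ha hg.hasDerivAt.hasDerivWithinAt).trans
    ((uniqueDiffWithinAt_Iic x).eq_deriv _ hb hg.hasDerivAt.hasDerivWithinAt).symm

end OneSidedDeriv

theorem stmt_3_general (n : ℕ) (C : Set (EuclideanSpace ℝ (Fin n)))
    (hcomp : IsCompact C)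
    (h0 : (0 : EuclideanSpace ℝ (Fin n)) ∈ interior C)
    (s x₀ x₁ : EuclideanSpace ℝ (Fin n)) (hs : ‖s‖ = 1)
    (hx₀ : x₀ ∈ C) (hx₁ : x₁ ∈ C) (hne : x₀ ≠ x₁)
    (hmax₀ : ∀ y ∈ C, ⟪s, y⟫ ≤ ⟪s, x₀⟫)
    (hmax₁ : ∀ y ∈ C, ⟪s, y⟫ ≤ ⟪s, x₁⟫) :
    let τ : EuclideanSpace ℝ (Fin n) → ℝ :=
      fun w => sSup {t : ℝ | 0 < t ∧ t • w ∈ {u : EuclideanSpace ℝ (Fin n) | ∀ y ∈ C, ⟪u, y⟫ ≤ 1}}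
    let g : ℝ → ℝ := fun ξ => τ (s + ξ • (x₁ - x₀))
    (∃ a b : ℝ, HasDerivWithinAt g a (Set.Ici 0) 0 ∧ HasDerivWithinAt g b (Set.Iic 0) 0 ∧
      a < b) ∧ ¬ DifferentiableAt ℝ g 0 := by
  intro τ g
  set v := x₁ - x₀
  set h : ℝ → ℝ := fun ξ => supportFun C (s + ξ • v)
  have hg : g = h⁻¹ :=
    funext fun ξ => sSup_smul_mem_polar_eq_inv_supportFun hcomp (interior_subset h0) _
  have hconvex : ConvexOn ℝ univ h := convexOn_supportFun_comp_line hcomp s v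
  have hh0 : h 0 = supportFun C s := by simp [h]
  have hpos : 0 < h 0 := hh0 ▸ supportFun_pos hcomp h0 (by rintro rfl; simp at hs)
  have hright := (hconvex.hasDerivWithinAt_rightDeriv_of_mem_interior
    (by simp : (0 : ℝ) ∈ interior univ)).Ici_of_Ioi
  have hleft := (hconvex.hasDerivWithinAt_leftDeriv_of_mem_interior
    (by simp : (0 : ℝ) ∈ interior univ)).Iic_of_Iio
  have hp : ⟪v, x₁⟫ ≤ derivWithin h (Ioi 0) 0 := hright.le_of_supporting_line_Ici fun ξ _ => by
    simpa [hh0] using supportFun_add_mul_inner_le hcomp hx₁ hmax₁ v ξ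
  have hq : derivWithin h (Iio 0) 0 ≤ ⟪v, x₀⟫ := hleft.le_of_supporting_line_Iic fun ξ _ => by
    simpa [hh0] using supportFun_add_mul_inner_le hcomp hx₀ hmax₀ v ξ
  have hgap : ⟪v, x₀⟫ < ⟪v, x₁⟫ := by
    rw [← sub_pos, ← inner_sub_right, real_inner_self_eq_norm_sq]
    exact pow_pos (norm_pos_iff.2 (sub_ne_zero.2 hne.symm)) 2
  have ha := hg.symm ▸ hright.inv hpos.ne'
  have hb := hg.symm ▸ hleft.inv hpos.ne'
  have hab : -derivWithin h (Ioi 0) 0 / h 0 ^ 2 < -derivWithin h (Iio 0) 0 / h 0 ^ 2 := by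
    gcongr; linarith
  exact ⟨⟨_, _, ha, hb, hab⟩, not_differentiableAt_of_hasDerivWithinAt_Ici_Iic ha hb hab.ne⟩

/-- If the linear functional `⟪s, ·⟫` has two distinct maximizers `x₀ ≠ x₁` over a compact
convex set `C` with `0` in its interior, then the restriction of the gauge-type function
`τ(w) = max{τ > 0 : τ • w ∈ C°}` of the polar `C°` to the line `ξ ↦ s + ξ • (x₁ - x₀)`
has distinct one-sided derivatives at `ξ = 0`; in particular it is not differentiable there. -/
theorem stmt_3 (n : ℕ) (C : Set (EuclideanSpace ℝ (Fin n)))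
    (hcomp : IsCompact C) (hconv : Convex ℝ C)
    (h0 : (0 : EuclideanSpace ℝ (Fin n)) ∈ interior C)
    (s x₀ x₁ : EuclideanSpace ℝ (Fin n)) (hs : ‖s‖ = 1)
    (hx₀ : x₀ ∈ C) (hx₁ : x₁ ∈ C) (hne : x₀ ≠ x₁)
    (hmax₀ : ∀ y ∈ C, ⟪s, y⟫ ≤ ⟪s, x₀⟫)
    (hmax₁ : ∀ y ∈ C, ⟪s, y⟫ ≤ ⟪s, x₁⟫) :
    let τ : EuclideanSpace ℝ (Fin n) → ℝ :=
      fun w => sSup {t : ℝ | 0 < t ∧ t • w ∈ {u : EuclideanSpace ℝ (Fin n) | ∀ y ∈ C, ⟪u, y⟫ ≤ 1}}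
    let g : ℝ → ℝ := fun ξ => τ (s + ξ • (x₁ - x₀))
    (∃ a b : ℝ, HasDerivWithinAt g a (Set.Ici 0) 0 ∧ HasDerivWithinAt g b (Set.Iic 0) 0 ∧
      a < b) ∧ ¬ DifferentiableAt ℝ g 0 :=
  stmt_3_general n C hcomp h0 s x₀ x₁ hs hx₀ hx₁ hne hmax₀ hmax₁
end

section
/- Let C ⊆ ℝⁿ be compact convex and let x ∈ C_SE with s ∈ S^{n-1} such that x is the unique maximizer of ⟨s, ·⟩ over C. Then for every ε > 0 there exists δ > 0 such that every y ∈ C admitting a unit normal vector within distance δ of s (i.e. Nor_y C ∩ S^{n-1} ∩ B_δ(s) ≠ ∅) satisfies ‖y − x‖ ≤ ε. Conversely, if such δ exist for all ε > 0 for some s ∈ Nor_x C ∩ S^{n-1}, then x ∈ C_SE. -/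
/-!
The normal cones of `C` form a closed relation between normals `u` and points `y`. If `x` is
the unique maximizer of `⟪s, ·⟫` over the compact set `C`, the fibre of this relation over `s`
is `{x}`, so by the tube lemma the fibres over all `u` near `s` lie in any given neighbourhood
of `x`. Conversely, if `y ∈ C` also maximizes `⟪s, ·⟫`, then `s` itself is a normal at `y`, and
the hypothesis with `u = s` forces `‖y - x‖ ≤ ε` for every `ε > 0`.
-/

open scoped RealInnerProductSpace Topology
open Metric

theorem eventually_forall_mem_imp_mem_of_isClosed {X Y : Type*} [TopologicalSpace X]
    [TopologicalSpace Y] {R : Set (X × Y)} {K U : Set Y} (hR : IsClosed R) (hK : IsCompact K)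
    (hU : IsOpen U) {x₀ : X} (hx₀ : ∀ y ∈ K, (x₀, y) ∈ R → y ∈ U) :
    ∀ᶠ x in 𝓝 x₀, ∀ y ∈ K, (x, y) ∈ R → y ∈ U := by
  refine hK.eventually_forall_of_forall_eventually fun y hy => ?_
  by_cases hxy : (x₀, y) ∈ R
  · exact ((continuous_snd.tendsto (x₀, y)).eventually_mem (hU.mem_nhds (hx₀ y hy hxy))).mono
      fun _ hzU _ => hzU
  · exact (hR.isOpen_compl.eventually_mem hxy).mono fun _ hzR hz => absurd hz hzR

section NormalCone

variable {E : Type*} [NormedAddCommGroup E] [InnerProductSpace ℝ E]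

def normalCone (C : Set E) (y : E) : Set E := {u | ∀ w ∈ C, 0 ≤ ⟪u, y - w⟫}

theorem mem_normalCone_iff {C : Set E} {y u : E} :
    u ∈ normalCone C y ↔ ∀ w ∈ C, ⟪u, w⟫ ≤ ⟪u, y⟫ := by
  simp only [normalCone, Set.mem_ofPred_eq, inner_sub_right, sub_nonneg]

theorem mem_normalCone_of_inner_le {C : Set E} {x y s : E} (hs : s ∈ normalCone C x)
    (hxy : ⟪s, x⟫ ≤ ⟪s, y⟫) : s ∈ normalCone C y :=
  mem_normalCone_iff.2 fun w hw => (mem_normalCone_iff.1 hs w hw).trans hxy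

theorem isClosed_setOf_mem_normalCone (C : Set E) :
    IsClosed {p : E × E | p.1 ∈ normalCone C p.2} := by
  change IsClosed {p : E × E | ∀ w ∈ C, 0 ≤ ⟪p.1, p.2 - w⟫}
  simp only [Set.ofPred_forall]
  exact isClosed_biInter fun w _ => isClosed_le continuous_const (by fun_prop)

theorem eq_of_mem_normalCone_of_forall_inner_lt {C : Set E} {x y s : E} (hx : x ∈ C)
    (hmax : ∀ z ∈ C, z ≠ x → ⟪s, z⟫ < ⟪s, x⟫) (hy : y ∈ C) (hs : s ∈ normalCone C y) :
    y = x := by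
  by_contra hyx
  exact (hmax y hy hyx).not_ge (mem_normalCone_iff.1 hs x hx)

theorem eventually_forall_mem_normalCone_imp_mem {C U : Set E} {x s : E} (hC : IsCompact C)
    (hx : x ∈ C) (hmax : ∀ z ∈ C, z ≠ x → ⟪s, z⟫ < ⟪s, x⟫) (hU : IsOpen U) (hxU : x ∈ U) :
    ∀ᶠ u in 𝓝 s, ∀ y ∈ C, u ∈ normalCone C y → y ∈ U :=
  eventually_forall_mem_imp_mem_of_isClosed (isClosed_setOf_mem_normalCone C) hC hU
    fun _ hy hs => eq_of_mem_normalCone_of_forall_inner_lt hx hmax hy hs ▸ hxU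

end NormalCone

theorem stmt_7_general (n : ℕ) (C : Set (EuclideanSpace ℝ (Fin n)))
    (hcomp : IsCompact C)
    (x : EuclideanSpace ℝ (Fin n)) (hx : x ∈ C) :
    -- forward direction: if `x` is the unique maximizer of `⟪s, ·⟫` over `C`
    ((∀ s : EuclideanSpace ℝ (Fin n), ‖s‖ = 1 → (∀ y ∈ C, y ≠ x → ⟪s, y⟫ < ⟪s, x⟫) →
      ∀ ε > (0 : ℝ), ∃ δ > (0 : ℝ), ∀ y ∈ C,
        (∃ u : EuclideanSpace ℝ (Fin n), ‖u‖ = 1 ∧ (∀ w ∈ C, 0 ≤ ⟪u, y - w⟫) ∧ ‖u - s‖ < δ) →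
        ‖y - x‖ ≤ ε)) ∧
    -- converse direction: for a unit normal `s` at `x` with this property, `x` is a point of
    -- strict curvature
    (∀ s : EuclideanSpace ℝ (Fin n), ‖s‖ = 1 → (∀ w ∈ C, 0 ≤ ⟪s, x - w⟫) →
      (∀ ε > (0 : ℝ), ∃ δ > (0 : ℝ), ∀ y ∈ C,
        (∃ u : EuclideanSpace ℝ (Fin n), ‖u‖ = 1 ∧ (∀ w ∈ C, 0 ≤ ⟪u, y - w⟫) ∧ ‖u - s‖ < δ) →
        ‖y - x‖ ≤ ε) →
      ∃ s' : EuclideanSpace ℝ (Fin n), ‖s'‖ = 1 ∧ ∀ y ∈ C, y ≠ x → ⟪s', y⟫ < ⟪s', x⟫) := by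
  refine ⟨fun s _ hmax ε hε => ?_, fun s hs hnor hnear => ⟨s, hs, fun y hy hyx => ?_⟩⟩
  · obtain ⟨δ, hδ, hball⟩ := Metric.eventually_nhds_iff.1
      (eventually_forall_mem_normalCone_imp_mem hcomp hx hmax isOpen_ball (mem_ball_self hε))
    refine ⟨δ, hδ, fun y hy ⟨u, _, hu, hus⟩ => ?_⟩
    rw [← dist_eq_norm] at hus ⊢
    exact (hball hus y hy hu).le
  · by_contra! hle
    have hsy : s ∈ normalCone C y := mem_normalCone_of_inner_le hnor hle
    refine hyx (eq_of_forall_dist_le fun ε hε => ?_)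
    obtain ⟨δ, hδ, hclose⟩ := hnear ε hε
    rw [dist_eq_norm]
    exact hclose y hy ⟨s, hs, hsy, by simpa using hδ⟩

/-- Characterization of points of strict curvature via normal cones: `x` is the unique
maximizer of `⟪s, ·⟫` over compact convex `C` iff (for some unit normal `s` at `x`) points of
`C` with unit normals close to `s` are close to `x`. -/
theorem stmt_7 (n : ℕ) (C : Set (EuclideanSpace ℝ (Fin n)))
    (hcomp : IsCompact C) (hconv : Convex ℝ C)
    (x : EuclideanSpace ℝ (Fin n)) (hx : x ∈ C) :
    -- forward direction: if `x` is the unique maximizer of `⟪s, ·⟫` over `C`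
    ((∀ s : EuclideanSpace ℝ (Fin n), ‖s‖ = 1 → (∀ y ∈ C, y ≠ x → ⟪s, y⟫ < ⟪s, x⟫) →
      ∀ ε > (0 : ℝ), ∃ δ > (0 : ℝ), ∀ y ∈ C,
        (∃ u : EuclideanSpace ℝ (Fin n), ‖u‖ = 1 ∧ (∀ w ∈ C, 0 ≤ ⟪u, y - w⟫) ∧ ‖u - s‖ < δ) →
        ‖y - x‖ ≤ ε)) ∧
    -- converse direction: for a unit normal `s` at `x` with this property, `x` is a point of
    -- strict curvature
    (∀ s : EuclideanSpace ℝ (Fin n), ‖s‖ = 1 → (∀ w ∈ C, 0 ≤ ⟪s, x - w⟫) →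
      (∀ ε > (0 : ℝ), ∃ δ > (0 : ℝ), ∀ y ∈ C,
        (∃ u : EuclideanSpace ℝ (Fin n), ‖u‖ = 1 ∧ (∀ w ∈ C, 0 ≤ ⟪u, y - w⟫) ∧ ‖u - s‖ < δ) →
        ‖y - x‖ ≤ ε) →
      ∃ s' : EuclideanSpace ℝ (Fin n), ‖s'‖ = 1 ∧ ∀ y ∈ C, y ≠ x → ⟪s', y⟫ < ⟪s', x⟫) :=
  stmt_7_general n C hcomp x hx
end

section
/- Let C ⊆ ℝⁿ be compact convex, x₀ ∈ C_SE, and s₀ ∈ S^{n-1} such that x₀ is the unique maximizer of ⟨s₀, ·⟩ over C. Then for every ε > 0 there exist finitely many points x₁, …, x_k ∈ C together with unit normals s_i ∈ Nor_{x_i} C ∩ S^{n-1} such that the set {x ∈ ℝⁿ : ⟨s₀, x − x₀⟩ ≥ 0 and ⟨s_i, x − x_i⟩ ≤ 0 for i = 1, …, k} is contained in the ball B_ε(x₀), and such that for all shifts (ξ₀, …, ξ_k) ∈ ℝ^{k+1} the set {x : ⟨s₀, x − x₀⟩ ≥ ξ₀, ⟨s_i, x − x_i⟩ ≤ ξ_i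 (i = 1,…,k)} is compact. -/
open scoped RealInnerProductSpace
open Metric

/-- For a point of strict curvature `x₀` of a compact convex set `C`, with supporting unit
vector `s₀`, and any `ε > 0`, there exist finitely many points `xᵢ ∈ C` with unit normals
`sᵢ` such that the polyhedral set `{x : ⟪s₀, x - x₀⟫ ≥ 0, ⟪sᵢ, x - xᵢ⟫ ≤ 0}` is contained in
`B_ε(x₀)`, and all its shifted versions are compact. -/
theorem stmt_8 (n : ℕ) (C : Set (EuclideanSpace ℝ (Fin n)))
    (hcomp : IsCompact C) (hconv : Convex ℝ C)
    (x₀ s₀ : EuclideanSpace ℝ (Fin n)) (hx₀ : x₀ ∈ C) (hs₀ : ‖s₀‖ = 1)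
    (hmax : ∀ y ∈ C, y ≠ x₀ → ⟪s₀, y⟫ < ⟪s₀, x₀⟫)
    (ε : ℝ) (hε : 0 < ε) :
    ∃ (k : ℕ) (xs ss : Fin k → EuclideanSpace ℝ (Fin n)),
      (∀ i, xs i ∈ C) ∧ (∀ i, ‖ss i‖ = 1) ∧
      (∀ i, ∀ w ∈ C, 0 ≤ ⟪ss i, xs i - w⟫) ∧
      ({x : EuclideanSpace ℝ (Fin n) |
          0 ≤ ⟪s₀, x - x₀⟫ ∧ ∀ i, ⟪ss i, x - xs i⟫ ≤ 0} ⊆ ball x₀ ε) ∧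
      (∀ (ξ₀ : ℝ) (ξ : Fin k → ℝ), IsCompact {x : EuclideanSpace ℝ (Fin n) |
          ξ₀ ≤ ⟪s₀, x - x₀⟫ ∧ ∀ i, ⟪ss i, x - xs i⟫ ≤ ξ i}) := by
  classical
  -- the half-shell
  set S : Set (EuclideanSpace ℝ (Fin n)) := sphere x₀ ε ∩ {x | 0 ≤ ⟪s₀, x - x₀⟫} with hSdef
  have hinnerCont : ∀ (a b : EuclideanSpace ℝ (Fin n)), Continuous fun x : EuclideanSpace ℝ (Fin n) => ⟪a, x - b⟫ := by
    intro a b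
    exact continuous_const.inner (continuous_id.sub continuous_const)
  have hScomp : IsCompact S :=
    (isCompact_sphere x₀ ε).inter_right (isClosed_le continuous_const (hinnerCont s₀ x₀))
  -- step 1: every point of S is strictly cut off by some normal constraint
  have hsep : ∀ x ∈ S, ∃ s y : EuclideanSpace ℝ (Fin n), y ∈ C ∧ ‖s‖ = 1 ∧ (∀ w ∈ C, 0 ≤ ⟪s, y - w⟫) ∧
      0 < ⟪s, x - y⟫ := by
    intro x hx
    obtain ⟨hx1, hx2⟩ := hx
    have hxC : x ∉ C := by
      intro hxC
      have hne : x ≠ x₀ := by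
        intro h
        rw [h, mem_sphere, dist_self] at hx1
        exact hε.ne hx1
      have h1 := hmax x hxC hne
      have h2 : (0:ℝ) ≤ ⟪s₀, x - x₀⟫ := hx2
      rw [inner_sub_right] at h2
      linarith
    obtain ⟨v, hvC, hveq⟩ := exists_norm_eq_iInf_of_complete_convex ⟨x₀, hx₀⟩
      hcomp.isClosed.isComplete hconv x
    have hproj : ∀ w ∈ C, ⟪x - v, w - v⟫ ≤ 0 :=
      (norm_eq_iInf_iff_real_inner_le_zero hconv hvC).mp hveq
    have hxv : x - v ≠ 0 := sub_ne_zero.mpr (fun h => hxC (h ▸ hvC))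
    have hnorm : (0:ℝ) < ‖x - v‖ := norm_pos_iff.mpr hxv
    refine ⟨‖x - v‖⁻¹ • (x - v), v, hvC, ?_, ?_, ?_⟩
    · rw [norm_smul, norm_inv, norm_norm, inv_mul_cancel₀ hnorm.ne']
    · intro w hw
      rw [real_inner_smul_left]
      have := hproj w hw
      have h2 : ⟪x - v, v - w⟫ = -⟪x - v, w - v⟫ := by
        rw [← inner_neg_right, neg_sub]
      rw [h2]
      exact mul_nonneg (by positivity) (by linarith)
    · rw [real_inner_smul_left, real_inner_self_eq_norm_sq]
      have : ‖x - v‖⁻¹ * ‖x - v‖ ^ 2 = ‖x - v‖ := by field_simp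
      rw [this]; exact hnorm
  choose! s y hyC hs1 hnor hpos using hsep
  -- step 2: finite subcover
  have hcover : S ⊆ ⋃ x ∈ S, {x' : EuclideanSpace ℝ (Fin n) | 0 < ⟪s x, x' - y x⟫} := by
    intro x hx
    exact Set.mem_biUnion hx (hpos x hx)
  obtain ⟨b, hbS, hbfin, hbcov⟩ := hScomp.elim_finite_subcover_image
    (fun x _ => isOpen_lt continuous_const (hinnerCont (s x) (y x))) hcover
  set t : Finset (EuclideanSpace ℝ (Fin n)) := hbfin.toFinset with htdef
  have htS : ∀ z ∈ t, z ∈ S := fun z hz => hbS (hbfin.mem_toFinset.mp hz)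
  set k := t.card with hk
  set e : Fin k ≃ {z // z ∈ t} := t.equivFin.symm with he
  have hSi : ∀ x' ∈ S, ∃ i : Fin k, 0 < ⟪s (e i : EuclideanSpace ℝ (Fin n)), x' - y (e i)⟫ := by
    intro x' hx'
    have hmem := hbcov hx'
    simp only [Set.mem_iUnion] at hmem
    obtain ⟨z, hz, hzx⟩ := hmem
    have hzt : z ∈ t := hbfin.mem_toFinset.mpr hz
    refine ⟨e.symm ⟨z, hzt⟩, ?_⟩
    simpa [Equiv.apply_symm_apply] using hzx
  -- a useful fact: for every unit vector on the `s₀` side, some constraint is positive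
  have hunit : ∀ v : EuclideanSpace ℝ (Fin n), ‖v‖ = 1 → 0 ≤ ⟪s₀, v⟫ →
      ∃ i : Fin k, 0 < ⟪s (e i : EuclideanSpace ℝ (Fin n)), v⟫ := by
    intro v hv hsv
    have hzS : x₀ + ε • v ∈ S := by
      constructor
      · rw [mem_sphere, dist_eq_norm, add_sub_cancel_left, norm_smul, hv, mul_one,
          Real.norm_eq_abs, abs_of_pos hε]
      · show (0:ℝ) ≤ ⟪s₀, (x₀ + ε • v) - x₀⟫
        rw [add_sub_cancel_left, real_inner_smul_right]
        positivity
    obtain ⟨i, hi⟩ := hSi _ hzS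
    refine ⟨i, ?_⟩
    rw [add_sub_right_comm, inner_add_right, real_inner_smul_right] at hi
    have hP : (0:ℝ) ≤ ⟪s (e i : EuclideanSpace ℝ (Fin n)), y (e i) - x₀⟫ :=
      hnor _ (htS _ (e i).2) x₀ hx₀
    have hswap : ⟪s (e i : EuclideanSpace ℝ (Fin n)), x₀ - y (e i)⟫
        = -⟪s (e i : EuclideanSpace ℝ (Fin n)), y (e i) - x₀⟫ := by
      rw [← inner_neg_right, neg_sub]
    have hεv : (0:ℝ) < ε * ⟪s (e i : EuclideanSpace ℝ (Fin n)), v⟫ := by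
      rw [hswap] at hi; linarith
    by_contra hcon
    push_neg at hcon
    nlinarith [mul_nonpos_of_nonneg_of_nonpos hε.le hcon]
  refine ⟨k, fun i => y (e i), fun i => s (e i), ?_, ?_, ?_, ?_, ?_⟩
  · exact fun i => hyC _ (htS _ (e i).2)
  · exact fun i => hs1 _ (htS _ (e i).2)
  · exact fun i => hnor _ (htS _ (e i).2)
  · -- ball containment
    intro x hx
    obtain ⟨hxa, hxb⟩ := hx
    rcases eq_or_ne x x₀ with h | h
    · simp [h, hε]
    · have hd : (0:ℝ) < ‖x - x₀‖ := norm_pos_iff.mpr (sub_ne_zero.mpr h)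
      have hvnorm : ‖(‖x - x₀‖⁻¹ • (x - x₀) : EuclideanSpace ℝ (Fin n))‖ = 1 := by
        rw [norm_smul, norm_inv, norm_norm, inv_mul_cancel₀ hd.ne']
      have hvs : (0:ℝ) ≤ ⟪s₀, ‖x - x₀‖⁻¹ • (x - x₀)⟫ := by
        rw [real_inner_smul_right]
        exact mul_nonneg (inv_nonneg.mpr hd.le) hxa
      obtain ⟨i, hi⟩ := hunit _ hvnorm hvs
      rw [real_inner_smul_right] at hi
      have hA : (0:ℝ) < ⟪s (e i : EuclideanSpace ℝ (Fin n)), x - x₀⟫ := by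
        by_contra hcon
        push_neg at hcon
        nlinarith [mul_nonpos_of_nonneg_of_nonpos (inv_nonneg.mpr hd.le) hcon]
      -- now use the point at distance ε in direction of x
      have hzS : x₀ + (ε * ‖x - x₀‖⁻¹) • (x - x₀) ∈ S := by
        constructor
        · rw [mem_sphere, dist_eq_norm, add_sub_cancel_left, norm_smul, Real.norm_eq_abs,
            abs_of_pos (by positivity), mul_assoc, inv_mul_cancel₀ hd.ne', mul_one]
        · show (0:ℝ) ≤ ⟪s₀, (x₀ + (ε * ‖x - x₀‖⁻¹) • (x - x₀)) - x₀⟫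
          rw [add_sub_cancel_left, real_inner_smul_right]
          positivity
      obtain ⟨i', hi'⟩ := hSi _ hzS
      rw [add_sub_right_comm, inner_add_right, real_inner_smul_right] at hi'
      have hP : (0:ℝ) ≤ ⟪s (e i' : EuclideanSpace ℝ (Fin n)), y (e i') - x₀⟫ :=
        hnor _ (htS _ (e i').2) x₀ hx₀
      have hswap : ⟪s (e i' : EuclideanSpace ℝ (Fin n)), x₀ - y (e i')⟫
          = -⟪s (e i' : EuclideanSpace ℝ (Fin n)), y (e i') - x₀⟫ := by
        rw [← inner_neg_right, neg_sub]
      have hxb' := hxb i'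
      have hdecomp : ⟪s (e i' : EuclideanSpace ℝ (Fin n)), x - y (e i')⟫
          = ⟪s (e i' : EuclideanSpace ℝ (Fin n)), x₀ - y (e i')⟫
            + ⟪s (e i' : EuclideanSpace ℝ (Fin n)), x - x₀⟫ := by
        rw [← inner_add_right]
        congr 1
        abel
      have hA' : (0:ℝ) < ⟪s (e i' : EuclideanSpace ℝ (Fin n)), x - x₀⟫ := by
        rw [hswap] at hi'
        by_contra hcon
        push_neg at hcon
        nlinarith [mul_nonpos_of_nonneg_of_nonpos (mul_nonneg hε.le (inv_nonneg.mpr hd.le)) hcon]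
      rw [mem_ball, dist_eq_norm]
      rw [hdecomp] at hxb'
      rw [hswap] at hi'
      -- from hi' : 0 < -P' + ε * d⁻¹ * A', hxb' : -P'? careful signs
      have hinv : ‖x - x₀‖⁻¹ * ‖x - x₀‖ = 1 := inv_mul_cancel₀ hd.ne'
      have h5 : ⟪s (e i' : EuclideanSpace ℝ (Fin n)), x - x₀⟫
          < ε * ‖x - x₀‖⁻¹ * ⟪s (e i' : EuclideanSpace ℝ (Fin n)), x - x₀⟫ := by
        rw [hswap] at hxb'
        linarith
      have key : ⟪s (e i' : EuclideanSpace ℝ (Fin n)), x - x₀⟫ * ‖x - x₀‖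
          < ε * ⟪s (e i' : EuclideanSpace ℝ (Fin n)), x - x₀⟫ := by
        calc ⟪s (e i' : EuclideanSpace ℝ (Fin n)), x - x₀⟫ * ‖x - x₀‖
            < (ε * ‖x - x₀‖⁻¹ * ⟪s (e i' : EuclideanSpace ℝ (Fin n)), x - x₀⟫) * ‖x - x₀‖ :=
              mul_lt_mul_of_pos_right h5 hd
          _ = ε * ⟪s (e i' : EuclideanSpace ℝ (Fin n)), x - x₀⟫ := by
              field_simp
      nlinarith [key, hA']
  · -- compactness of shifted sets
    intro ξ₀ ξ
    -- the family of all constraint directions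
    set c : Fin (k+1) → EuclideanSpace ℝ (Fin n) :=
      Fin.cons (-s₀) (fun i => s (e i)) with hc
    have hune : (Finset.univ : Finset (Fin (k+1))).Nonempty := ⟨0, Finset.mem_univ 0⟩
    set g : EuclideanSpace ℝ (Fin n) → ℝ :=
      fun v => Finset.univ.sup' hune (fun j => ⟪c j, v⟫) with hg
    have hgcont : Continuous g :=
      Continuous.finset_sup'_apply hune (fun j _ => continuous_const.inner continuous_id)
    have hgpos : ∀ v ∈ sphere (0 : EuclideanSpace ℝ (Fin n)) 1, 0 < g v := by
      intro v hv
      have hv1 : ‖v‖ = 1 := by simpa using hv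
      rcases lt_or_ge (⟪s₀, v⟫ : ℝ) 0 with hcase | hcase
      · have h0 : (0:ℝ) < ⟪c 0, v⟫ := by
          rw [hc, Fin.cons_zero, inner_neg_left]
          linarith
        exact lt_of_lt_of_le h0
          (Finset.le_sup' (fun j => (⟪c j, v⟫ : ℝ)) (Finset.mem_univ (0 : Fin (k+1))))
      · obtain ⟨i, hi⟩ := hunit v hv1 hcase
        have h0 : (0:ℝ) < ⟪c i.succ, v⟫ := by
          rw [hc, Fin.cons_succ]
          exact hi
        exact lt_of_lt_of_le h0
          (Finset.le_sup' (fun j => (⟪c j, v⟫ : ℝ)) (Finset.mem_univ i.succ))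
    obtain ⟨v₀, hv₀, hmin⟩ := (isCompact_sphere (0 : EuclideanSpace ℝ (Fin n)) 1).exists_isMinOn
      ⟨s₀, by simpa using hs₀⟩ hgcont.continuousOn
    have hδ : 0 < g v₀ := hgpos v₀ hv₀
    set B : ℝ := Finset.univ.sup' hune
      (Fin.cons (-ξ₀) (fun i => ξ i + ‖y (e i) - x₀‖)) with hB
    apply Metric.isCompact_of_isClosed_isBounded
    · show IsClosed {x : EuclideanSpace ℝ (Fin n) |
          ξ₀ ≤ ⟪s₀, x - x₀⟫ ∧ ∀ i, ⟪s (e i : EuclideanSpace ℝ (Fin n)), x - y (e i)⟫ ≤ ξ i}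
      have heq : {x : EuclideanSpace ℝ (Fin n) |
            ξ₀ ≤ ⟪s₀, x - x₀⟫ ∧ ∀ i, ⟪s (e i : EuclideanSpace ℝ (Fin n)), x - y (e i)⟫ ≤ ξ i}
          = {x : EuclideanSpace ℝ (Fin n) | ξ₀ ≤ ⟪s₀, x - x₀⟫} ∩
            ⋂ i, {x : EuclideanSpace ℝ (Fin n) |
              ⟪s (e i : EuclideanSpace ℝ (Fin n)), x - y (e i)⟫ ≤ ξ i} := by
        ext x
        simp [Set.mem_iInter]
      rw [heq]
      exact (isClosed_le continuous_const (hinnerCont s₀ x₀)).inter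
        (isClosed_iInter fun i => isClosed_le (hinnerCont _ _) continuous_const)
    · refine (Metric.isBounded_closedBall (x := x₀) (r := max 0 (B / g v₀))).subset ?_
      intro x hx
      obtain ⟨hxa, hxb⟩ := hx
      rw [mem_closedBall]
      rcases eq_or_ne x x₀ with h | h
      · simp [h]
      · have hd : (0:ℝ) < ‖x - x₀‖ := norm_pos_iff.mpr (sub_ne_zero.mpr h)
        have hvs : (‖x - x₀‖⁻¹ • (x - x₀) : EuclideanSpace ℝ (Fin n)) ∈
            sphere (0 : EuclideanSpace ℝ (Fin n)) 1 := by
          simp only [mem_sphere, dist_zero_right]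
          rw [norm_smul, norm_inv, norm_norm, inv_mul_cancel₀ hd.ne']
        have h1 : g v₀ ≤ g (‖x - x₀‖⁻¹ • (x - x₀)) := hmin hvs
        obtain ⟨j, _, hj⟩ := Finset.exists_mem_eq_sup' hune
          (fun j => (⟪c j, ‖x - x₀‖⁻¹ • (x - x₀)⟫ : ℝ))
        have h1' : g v₀ ≤ ⟪c j, ‖x - x₀‖⁻¹ • (x - x₀)⟫ := by
          refine le_trans h1 ?_
          rw [hg]
          simp only []
          rw [hj]
        rw [real_inner_smul_right, inv_mul_eq_div, le_div_iff₀ hd] at h1'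
        have h3 : ⟪c j, x - x₀⟫ ≤ B := by
          induction j using Fin.cases with
          | zero =>
            refine le_trans ?_ (Finset.le_sup'
              (Fin.cons (-ξ₀) (fun i => ξ i + ‖y (e i : EuclideanSpace ℝ (Fin n)) - x₀‖))
              (Finset.mem_univ (0 : Fin (k+1))))
            rw [hc, Fin.cons_zero, inner_neg_left, Fin.cons_zero]
            linarith
          | succ i =>
            refine le_trans ?_ (Finset.le_sup'
              (Fin.cons (-ξ₀) (fun i => ξ i + ‖y (e i : EuclideanSpace ℝ (Fin n)) - x₀‖))
              (Finset.mem_univ i.succ))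
            rw [hc, Fin.cons_succ, Fin.cons_succ]
            have hdecomp : ⟪s (e i : EuclideanSpace ℝ (Fin n)), x - x₀⟫
                = ⟪s (e i : EuclideanSpace ℝ (Fin n)), x - y (e i)⟫
                  + ⟪s (e i : EuclideanSpace ℝ (Fin n)), y (e i) - x₀⟫ := by
              rw [← inner_add_right]
              congr 1
              abel
            have hCS : ⟪s (e i : EuclideanSpace ℝ (Fin n)), y (e i) - x₀⟫ ≤ ‖y (e i) - x₀‖ := by
              have := real_inner_le_norm (s (e i : EuclideanSpace ℝ (Fin n))) (y (e i) - x₀)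
              rwa [hs1 _ (htS _ (e i).2), one_mul] at this
            rw [hdecomp]
            have := hxb i
            linarith
        have hfin : ‖x - x₀‖ ≤ B / g v₀ := by
          rw [le_div_iff₀ hδ]
          nlinarith
        rw [dist_eq_norm]
        exact le_trans hfin (le_max_right 0 (B / g v₀))
end

section
/- Let C ⊆ ℝⁿ be a nonempty compact convex set, let C¹, C², … be compact subsets of ℝⁿ with Hausdorff distance d(Cⁿ, C) → 0, and let s ∈ S^{n-1} be such that x* = arg max_{x ∈ C} ⟨s, x⟩ is unique. If for each n, xₙ is any maximizer of ⟨s, ·⟩ over Cⁿ, then xₙ → x* as n → ∞. -/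
/-!
Compactness turns uniqueness of the maximizer `x*` into a quantitative gap: points of `C` at
distance `≥ ε` from `x*` lose at least some `η > 0` in the objective. Once `C` and `Cₖ` are
`δ`-close, a point of `Cₖ` near `x*` shows that the maximizer `xₖ` is almost optimal for `C`, and
a point of `C` near `xₖ` is then almost optimal too, hence close to `x*` by the gap.
-/

open scoped RealInnerProductSpace
open Metric Filter Topology

variable {α : Type*} [PseudoMetricSpace α]

lemma IsCompact.exists_pos_add_le_of_le_dist {f : α → ℝ} {C : Set α} (hC : IsCompact C)
    (hf : ContinuousOn f C) {x : α} (hmax : ∀ y ∈ C, y ≠ x → f y < f x) {ε : ℝ} (hε : 0 < ε) :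
    ∃ η > 0, ∀ y ∈ C, ε ≤ dist y x → f y + η ≤ f x := by
  have hfar : ∀ {y}, y ∈ C → ε ≤ dist y x → y ∈ C \ ball x ε := fun hy hdist =>
    ⟨hy, by simpa [mem_ball] using hdist⟩
  rcases (C \ ball x ε).eq_empty_or_nonempty with hK | hK
  · exact ⟨1, one_pos, fun y hy hdist => absurd (hfar hy hdist) (hK ▸ Set.notMem_empty y)⟩
  obtain ⟨z, hzK, hzmax⟩ :=
    (hC.diff isOpen_ball).exists_isMaxOn hK (hf.mono Set.sdiff_subset)
  have hzx : z ≠ x := by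
    rintro rfl
    exact hzK.2 (mem_ball_self hε)
  refine ⟨f x - f z, sub_pos.2 (hmax z hzK.1 hzx), fun y hy hdist => ?_⟩
  have : f y ≤ f z := hzmax (hfar hy hdist)
  linarith

theorem tendsto_of_isMaxOn_of_tendsto_hausdorffDist {ι : Type*} {l : Filter ι} {f : α → ℝ}
    (hf : UniformContinuous f) {C : Set α} (hC : IsCompact C) {x : α} (hx : x ∈ C)
    (hmax : ∀ y ∈ C, y ≠ x → f y < f x) {A : ι → Set α} (hA : ∀ i, Bornology.IsBounded (A i))
    (hd : Tendsto (fun i => hausdorffDist (A i) C) l (𝓝 0)) {xs : ι → α}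
    (hxs : ∀ i, xs i ∈ A i) (hxsmax : ∀ i, IsMaxOn f (A i) (xs i)) :
    Tendsto xs l (𝓝 x) := by
  rw [Metric.tendsto_nhds]
  intro ε hε
  obtain ⟨η, hη, hgap⟩ :=
    hC.exists_pos_add_le_of_le_dist hf.continuous.continuousOn hmax (half_pos hε)
  obtain ⟨δ, hδ, hfδ⟩ := Metric.uniformContinuous_iff.1 hf (η / 2) (half_pos hη)
  have hf_close : ∀ {a b}, dist a b < δ → f b < f a + η / 2 := fun hab => by
    linarith [(abs_sub_lt_iff.1 (Real.dist_eq _ _ ▸ hfδ hab)).2]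
  filter_upwards [hd.eventually (eventually_lt_nhds (lt_min hδ (half_pos hε)))] with i hi
  have hfin : hausdorffEDist (A i) C ≠ ⊤ :=
    hausdorffEDist_ne_top_of_nonempty_of_bounded ⟨xs i, hxs i⟩ ⟨x, hx⟩ (hA i) hC.isBounded
  obtain ⟨y, hyA, hyx⟩ := exists_dist_lt_of_hausdorffDist_lt' hx hi hfin
  obtain ⟨c, hcC, hxc⟩ := exists_dist_lt_of_hausdorffDist_lt (hxs i) hi hfin
  have hfx : f x < f y + η / 2 := hf_close (hyx.trans_le (min_le_left _ _))
  have hfxs : f (xs i) < f c + η / 2 :=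
    hf_close (dist_comm c (xs i) ▸ hxc.trans_le (min_le_left _ _))
  have hfy : f y ≤ f (xs i) := hxsmax i hyA
  have hcx : dist c x < ε / 2 := by
    by_contra! hfar
    linarith [hgap c hcC hfar]
  calc dist (xs i) x ≤ dist (xs i) c + dist c x := dist_triangle _ _ _
    _ < ε / 2 + ε / 2 := add_lt_add (hxc.trans_le (min_le_right _ _)) hcx
    _ = ε := add_halves ε

theorem stmt_9_general (n : ℕ) (C : Set (EuclideanSpace ℝ (Fin n)))
    (hcomp : IsCompact C)
    (Cseq : ℕ → Set (EuclideanSpace ℝ (Fin n)))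
    (hCcomp : ∀ k, IsCompact (Cseq k))
    (hd : Tendsto (fun k => hausdorffDist (Cseq k) C) atTop (nhds 0))
    (s : EuclideanSpace ℝ (Fin n))
    (xstar : EuclideanSpace ℝ (Fin n)) (hxstar : xstar ∈ C)
    (hstrict : ∀ y ∈ C, y ≠ xstar → ⟪s, y⟫ < ⟪s, xstar⟫)
    (xseq : ℕ → EuclideanSpace ℝ (Fin n))
    (hmem : ∀ k, xseq k ∈ Cseq k)
    (hopt : ∀ k, ∀ y ∈ Cseq k, ⟪s, y⟫ ≤ ⟪s, xseq k⟫) :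
    Tendsto xseq atTop (nhds xstar) :=
  tendsto_of_isMaxOn_of_tendsto_hausdorffDist (innerSL ℝ s).uniformContinuous hcomp hxstar
    hstrict (fun k => (hCcomp k).isBounded) hd hmem fun k => isMaxOn_iff.2 (hopt k)

/-- If compact sets `Cₖ` converge to a nonempty compact convex set `C` in Hausdorff distance
and `⟪s, ·⟫` has a unique maximizer `x*` over `C`, then any sequence of maximizers of
`⟪s, ·⟫` over `Cₖ` converges to `x*`. -/
theorem stmt_9 (n : ℕ) (C : Set (EuclideanSpace ℝ (Fin n)))
    (hne : C.Nonempty) (hcomp : IsCompact C) (hconv : Convex ℝ C)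
    (Cseq : ℕ → Set (EuclideanSpace ℝ (Fin n)))
    (hCne : ∀ k, (Cseq k).Nonempty) (hCcomp : ∀ k, IsCompact (Cseq k))
    (hd : Tendsto (fun k => hausdorffDist (Cseq k) C) atTop (nhds 0))
    (s : EuclideanSpace ℝ (Fin n)) (hs : ‖s‖ = 1)
    (xstar : EuclideanSpace ℝ (Fin n)) (hxstar : xstar ∈ C)
    (hstrict : ∀ y ∈ C, y ≠ xstar → ⟪s, y⟫ < ⟪s, xstar⟫)
    (xseq : ℕ → EuclideanSpace ℝ (Fin n))
    (hmem : ∀ k, xseq k ∈ Cseq k)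
    (hopt : ∀ k, ∀ y ∈ Cseq k, ⟪s, y⟫ ≤ ⟪s, xseq k⟫) :
    Tendsto xseq atTop (nhds xstar) :=
  stmt_9_general n C hcomp Cseq hCcomp hd s xstar hxstar hstrict xseq hmem hopt
end

section
/- Let λ : S^{n-1} → ℝ be continuous and C = ⋂_{s ∈ S^{n-1}} {x : ⟨s, x⟩ ≤ λ(s)}. Then for every ε > 0 there exist finitely many unit vectors s₁, …, s_k such that every point of ⋂_{i=1}^k {x : ⟨s_i, x⟩ ≤ λ(s_i)} lies within Euclidean distance ε of C. -/
/-!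
Bound `λ ≤ M` on the sphere. By compactness (nested compact sets), the relaxed body
`{x : ⟪s, x⟫ ≤ λ(s) + η for all s} ∩ closedBall 0 (2M)` lies within distance `ε` of `C`
once `η > 0` is small. Now take a finite `δ`-net of the sphere. For `δ ≤ 1/2` its half-spaces
alone confine `x` to `closedBall 0 (2M)`, and since `⟪v, x⟫ ≤ ⟪s, x⟫ + ‖v - s‖ ‖x‖`, uniform
continuity of `λ` turns the finitely many constraints into all the relaxed ones for small `δ`.
-/

open scoped RealInnerProductSpace
open Metric Set

variable {E : Type*} [NormedAddCommGroup E] [InnerProductSpace ℝ E]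

def halfspaceInter (T : Set E) (f : E → ℝ) : Set E :=
  ⋂ s ∈ T, {x | ⟪s, x⟫ ≤ f s}

lemma mem_halfspaceInter {T : Set E} {f : E → ℝ} {x : E} :
    x ∈ halfspaceInter T f ↔ ∀ s ∈ T, ⟪s, x⟫ ≤ f s :=
  mem_iInter₂

lemma isClosed_halfspaceInter (T : Set E) (f : E → ℝ) : IsClosed (halfspaceInter T f) :=
  isClosed_biInter fun _ _ => isClosed_le (continuous_const.inner continuous_id) continuous_const

lemma halfspaceInter_mono {T : Set E} {f g : E → ℝ} (hfg : ∀ s ∈ T, f s ≤ g s) :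
    halfspaceInter T f ⊆ halfspaceInter T g := fun _ hx =>
  mem_halfspaceInter.2 fun s hs => (mem_halfspaceInter.1 hx s hs).trans (hfg s hs)

lemma iInter_halfspaceInter_add (T : Set E) (f : E → ℝ) :
    ⋂ η : {η : ℝ // 0 < η}, halfspaceInter T (fun s => f s + η) = halfspaceInter T f := by
  refine Subset.antisymm (fun x hx => mem_halfspaceInter.2 fun s hs => ?_)
    (subset_iInter fun η => halfspaceInter_mono fun s _ => le_add_of_nonneg_right η.2.le)
  exact le_of_forall_pos_le_add fun η hη => mem_halfspaceInter.1 (mem_iInter.1 hx ⟨η, hη⟩) s hs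

lemma IsCompact.exists_inter_halfspaceInter_add_subset {K U T : Set E} {f : E → ℝ}
    (hK : IsCompact K) (hU : IsOpen U) (hKU : K ∩ halfspaceInter T f ⊆ U) :
    ∃ η > 0, K ∩ halfspaceInter T (fun s => f s + η) ⊆ U := by
  have : Nonempty {η : ℝ // 0 < η} := ⟨⟨1, one_pos⟩⟩
  have hdir : Directed (· ⊇ ·) fun η : {η : ℝ // 0 < η} =>
      K ∩ halfspaceInter T (fun s => f s + η) :=
    Monotone.directed_ge fun η η' h =>
      inter_subset_inter_right K (halfspaceInter_mono fun _ _ => by simpa using h)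
  obtain ⟨⟨η, hη⟩, hsub⟩ := exists_subset_nhds_of_isCompact' hdir
    (fun _ => hK.inter_right (isClosed_halfspaceInter _ _))
    (fun _ => hK.isClosed.inter (isClosed_halfspaceInter _ _))
    fun x hx => hU.mem_nhds <| hKU <| by rwa [← inter_iInter, iInter_halfspaceInter_add] at hx
  exact ⟨η, hη, hsub⟩

lemma inner_le_inner_add_dist_mul_norm (v s x : E) : ⟪v, x⟫ ≤ ⟪s, x⟫ + dist v s * ‖x‖ := by
  have := real_inner_le_norm (v - s) x
  rw [inner_sub_left, ← dist_eq_norm] at this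
  linarith

lemma halfspaceInter_inter_closedBall_subset {S T : Set E} {f g : E → ℝ} {R : ℝ}
    (h : ∀ v ∈ S, ∃ s ∈ T, f s + dist v s * R ≤ g v) :
    halfspaceInter T f ∩ closedBall 0 R ⊆ halfspaceInter S g := by
  rintro x ⟨hxT, hxR⟩
  refine mem_halfspaceInter.2 fun v hv => ?_
  obtain ⟨s, hs, hsv⟩ := h v hv
  calc ⟪v, x⟫ ≤ ⟪s, x⟫ + dist v s * ‖x‖ := inner_le_inner_add_dist_mul_norm v s x
    _ ≤ f s + dist v s * R := by
      gcongr
      exacts [mem_halfspaceInter.1 hxT s hs, mem_closedBall_zero_iff.1 hxR]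
    _ ≤ g v := hsv

lemma mul_norm_le_of_mem_halfspaceInter {T : Set E} {f : E → ℝ} {δ M : ℝ}
    (hnet : ∀ v ∈ sphere (0 : E) 1, ∃ s ∈ T, dist v s ≤ δ) (hM : ∀ s ∈ T, f s ≤ M)
    (hM0 : 0 ≤ M) {x : E} (hx : x ∈ halfspaceInter T f) : (1 - δ) * ‖x‖ ≤ M := by
  rcases eq_or_ne x 0 with rfl | hx0
  · simpa using hM0
  set u := ‖x‖⁻¹ • x
  have hu : u ∈ sphere (0 : E) 1 := by simp [u, norm_smul, hx0]
  have hux : ⟪u, x⟫ = ‖x‖ := by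
    rw [real_inner_smul_left, real_inner_self_eq_norm_sq]
    field_simp [norm_ne_zero_iff.2 hx0]
  obtain ⟨s, hs, hus⟩ := hnet u hu
  have : ‖x‖ ≤ M + δ * ‖x‖ :=
    calc ‖x‖ = ⟪u, x⟫ := hux.symm
      _ ≤ ⟪s, x⟫ + dist u s * ‖x‖ := inner_le_inner_add_dist_mul_norm u s x
      _ ≤ M + δ * ‖x‖ := by
        gcongr
        exact (mem_halfspaceInter.1 hx s hs).trans (hM s hs)
  linarith

theorem exists_finset_halfspaceInter_subset_thickening [FiniteDimensional ℝ E] {lam : E → ℝ}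
    (hlam : ContinuousOn lam (sphere 0 1)) {ε : ℝ} (hε : 0 < ε) :
    ∃ T : Finset E, ↑T ⊆ sphere (0 : E) 1 ∧
      halfspaceInter T lam ⊆ thickening ε (halfspaceInter (sphere 0 1) lam) := by
  set S := sphere (0 : E) 1
  have hS : IsCompact S := isCompact_sphere 0 1
  obtain ⟨M, hM0, hM⟩ : ∃ M, 0 ≤ M ∧ ∀ s ∈ S, lam s ≤ M := by
    obtain ⟨M, hM⟩ := hS.bddAbove_image hlam
    exact ⟨max M 0, le_max_right _ _,
      fun s hs => (hM (mem_image_of_mem lam hs)).trans (le_max_left _ _)⟩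
  obtain ⟨η, hη, hηU⟩ :=
    (isCompact_closedBall (0 : E) (2 * M)).exists_inter_halfspaceInter_add_subset
      isOpen_thickening (inter_subset_right.trans (self_subset_thickening hε _))
  obtain ⟨δ₀, hδ₀, hlamδ₀⟩ := Metric.uniformContinuousOn_iff.1
    (hS.uniformContinuousOn_of_continuous hlam) (η / 2) (half_pos hη)
  obtain ⟨δ, hδ, hδδ₀, hδhalf, hδM⟩ : ∃ δ > 0, δ ≤ δ₀ ∧ δ ≤ 1 / 2 ∧ δ * (2 * M) ≤ η / 2 := by
    refine ⟨min (min δ₀ (1 / 2)) (η / (2 * (2 * M + 1))), by positivity,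
      (min_le_left _ _).trans (min_le_left _ _), (min_le_left _ _).trans (min_le_right _ _), ?_⟩
    calc _ ≤ η / (2 * (2 * M + 1)) * (2 * M + 1) := by
          gcongr
          · exact min_le_right _ _
          · linarith
      _ = η / 2 := by field_simp
  obtain ⟨T, hTS, hTfin, hcover⟩ := hS.finite_cover_balls hδ
  have hnet : ∀ v ∈ S, ∃ s ∈ T, dist v s < δ := fun v hv => by simpa using hcover hv
  refine ⟨hTfin.toFinset, by simpa using hTS, fun x hx => ?_⟩
  rw [hTfin.coe_toFinset] at hx
  have hxR : x ∈ closedBall 0 (2 * M) := by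
    have := mul_norm_le_of_mem_halfspaceInter
      (fun v hv => (hnet v hv).imp fun _ hs => ⟨hs.1, hs.2.le.trans hδhalf⟩)
      (fun s hs => hM s (hTS hs)) hM0 hx
    rw [mem_closedBall_zero_iff]
    linarith
  refine hηU ⟨hxR, halfspaceInter_inter_closedBall_subset (fun v hv => ?_) ⟨hx, hxR⟩⟩
  obtain ⟨s, hs, hvs⟩ := hnet v hv
  have hlam_s : lam s < lam v + η / 2 := by
    have := hlamδ₀ v hv s (hTS hs) (hvs.trans_le hδδ₀)
    rw [Real.dist_eq, abs_sub_lt_iff] at this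
    linarith
  have hdist : dist v s * (2 * M) ≤ η / 2 := by
    calc _ ≤ δ * (2 * M) := by gcongr
      _ ≤ η / 2 := hδM
  exact ⟨s, hs, by linarith⟩

/-- For `C = ⋂_{s ∈ S^{n-1}} {x : ⟪s, x⟫ ≤ λ(s)}` with `λ` continuous, and every `ε > 0`,
finitely many of the half-spaces suffice to approximate `C` to within distance `ε`. -/
theorem stmt_11 (n : ℕ) (lam : EuclideanSpace ℝ (Fin n) → ℝ)
    (hlam : ContinuousOn lam (sphere (0 : EuclideanSpace ℝ (Fin n)) 1))
    (ε : ℝ) (hε : 0 < ε) :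
    ∃ (k : ℕ) (s : Fin k → EuclideanSpace ℝ (Fin n)),
      (∀ i, ‖s i‖ = 1) ∧
      ∀ x : EuclideanSpace ℝ (Fin n), (∀ i, ⟪s i, x⟫ ≤ lam (s i)) →
        EMetric.infEdist x (⋂ s' ∈ sphere (0 : EuclideanSpace ℝ (Fin n)) 1,
          {y : EuclideanSpace ℝ (Fin n) | ⟪s', y⟫ ≤ lam s'}) ≤ ENNReal.ofReal ε := by
  obtain ⟨T, hTS, hT⟩ := exists_finset_halfspaceInter_subset_thickening hlam hε
  refine ⟨T.toList.length, T.toList.get, fun i => ?_, fun x hx => ?_⟩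
  · exact mem_sphere_zero_iff_norm.1 (hTS (Finset.mem_toList.1 (List.get_mem _ _)))
  · refine mem_cthickening_iff.1 (thickening_subset_cthickening _ _ (hT ?_))
    refine mem_halfspaceInter.2 fun s hs => ?_
    obtain ⟨i, rfl⟩ := List.mem_iff_get.1 (Finset.mem_toList.2 hs)
    exact hx i
end

section
/- Let C ⊆ ℝⁿ be nonempty compact convex with dual description C = ⋂_{s ∈ S^{n-1}} {x : ⟨s, x⟩ ≤ λ(s)} for a continuous λ, and let C¹, C², … be compact convex subsets of ℝⁿ such that for every linear functional f : ℝⁿ → ℝ, max_{p ∈ Cⁿ} f(p) → max_{p ∈ C} f(p) as n → ∞. Then d(Cⁿ, C) → 0 in Hausdorff distance. -/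
open scoped RealInnerProductSpace
open Metric Filter

lemma norm_le_sum_abs {n : ℕ} (x : EuclideanSpace ℝ (Fin n)) :
    ‖x‖ ≤ ∑ i, |x i| := by
  rw [EuclideanSpace.norm_eq]
  have h1 : ∑ i, ‖x i‖ ^ 2 ≤ (∑ i, ‖x i‖) ^ 2 :=
    Finset.sum_sq_le_sq_sum_of_nonneg fun i _ => norm_nonneg _
  calc Real.sqrt (∑ i, ‖x i‖ ^ 2) ≤ Real.sqrt ((∑ i, ‖x i‖) ^ 2) := Real.sqrt_le_sqrt h1
    _ = ∑ i, ‖x i‖ := Real.sqrt_sq (Finset.sum_nonneg fun i _ => norm_nonneg _)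
    _ = ∑ i, |x i| := by simp [Real.norm_eq_abs]

lemma sep_lemma {n : ℕ} {K : Set (EuclideanSpace ℝ (Fin n))} (hK : IsCompact K)
    (hKne : K.Nonempty) (hKconv : Convex ℝ K) {x : EuclideanSpace ℝ (Fin n)} {ε : ℝ}
    (hε : 0 < ε) (hd : ε ≤ infDist x K) :
    ∃ s : EuclideanSpace ℝ (Fin n), ‖s‖ = 1 ∧ ∀ y ∈ K, ⟪s, y⟫ ≤ ⟪s, x⟫ - ε := by
  obtain ⟨v, hvK, hv⟩ := hK.exists_infDist_eq_dist hKne x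
  have hdv : ε ≤ ‖x - v‖ := by rwa [hv, dist_eq_norm] at hd
  have hd0 : 0 < ‖x - v‖ := lt_of_lt_of_le hε hdv
  have hproj : ∀ w ∈ K, ⟪x - v, w - v⟫ ≤ 0 := by
    refine (norm_eq_iInf_iff_real_inner_le_zero hKconv hvK).1 ?_
    have : (⨅ w : K, ‖x - w‖) = infDist x K := by
      rw [infDist_eq_iInf]; simp_rw [dist_eq_norm]
    rw [this, hv, dist_eq_norm]
  refine ⟨‖x - v‖⁻¹ • (x - v), norm_smul_inv_norm (by
    intro h; rw [h] at hd0; simp at hd0), fun w hw => ?_⟩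
  have h1 : ⟪‖x - v‖⁻¹ • (x - v), w⟫ - ⟪‖x - v‖⁻¹ • (x - v), v⟫ ≤ 0 := by
    rw [← inner_sub_right, real_inner_smul_left]
    exact mul_nonpos_of_nonneg_of_nonpos (by positivity) (hproj w hw)
  have h2 : ⟪‖x - v‖⁻¹ • (x - v), x⟫ - ⟪‖x - v‖⁻¹ • (x - v), v⟫ = ‖x - v‖ := by
    rw [← inner_sub_right, real_inner_smul_left, real_inner_self_eq_norm_sq]
    field_simp
  linarith [hdv]

/-- The support value of a set in direction `s`. -/
noncomputable def supF {n : ℕ} (s : EuclideanSpace ℝ (Fin n))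
    (A : Set (EuclideanSpace ℝ (Fin n))) : ℝ :=
  sSup ((fun y => ⟪s, y⟫) '' A)

lemma le_supF {n : ℕ} {s x : EuclideanSpace ℝ (Fin n)}
    {A : Set (EuclideanSpace ℝ (Fin n))} (hA : IsCompact A) (hx : x ∈ A) :
    ⟪s, x⟫ ≤ supF s A :=
  le_csSup ((hA.image (continuous_const.inner continuous_id)).bddAbove) ⟨x, hx, rfl⟩

lemma supF_le {n : ℕ} {s : EuclideanSpace ℝ (Fin n)}
    {A : Set (EuclideanSpace ℝ (Fin n))} (hA : A.Nonempty) {b : ℝ}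
    (hb : ∀ x ∈ A, ⟪s, x⟫ ≤ b) : supF s A ≤ b :=
  csSup_le (hA.image _) (by rintro _ ⟨y, hy, rfl⟩; exact hb y hy)

/-- If `C` is nonempty compact convex with dual description by a continuous `λ` on the
sphere, and `Cᵏ` are nonempty compact convex sets whose support values converge to those
of `C` for every linear functional, then `Cᵏ → C` in Hausdorff distance. -/
theorem stmt_14 (n : ℕ) (lam : EuclideanSpace ℝ (Fin n) → ℝ)
    (hlam : ContinuousOn lam (sphere (0 : EuclideanSpace ℝ (Fin n)) 1))
    (C : Set (EuclideanSpace ℝ (Fin n)))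
    (hCdef : C = ⋂ s ∈ sphere (0 : EuclideanSpace ℝ (Fin n)) 1,
      {x : EuclideanSpace ℝ (Fin n) | ⟪s, x⟫ ≤ lam s})
    (hne : C.Nonempty) (hconv : Convex ℝ C)
    (Cseq : ℕ → Set (EuclideanSpace ℝ (Fin n)))
    (hne' : ∀ k, (Cseq k).Nonempty) (hcomp' : ∀ k, IsCompact (Cseq k))
    (hconv' : ∀ k, Convex ℝ (Cseq k))
    (hsupp : ∀ f : EuclideanSpace ℝ (Fin n) →ₗ[ℝ] ℝ,
      Tendsto (fun k => sSup (f '' Cseq k)) atTop (nhds (sSup (f '' C)))) :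
    Tendsto (fun k => hausdorffDist (Cseq k) C) atTop (nhds 0) := by
  have cinner : ∀ s : EuclideanSpace ℝ (Fin n), Continuous fun y => ⟪s, y⟫ := fun s =>
    continuous_const.inner continuous_id
  have hsupp' : ∀ s : EuclideanSpace ℝ (Fin n),
      Tendsto (fun k => supF s (Cseq k)) atTop (nhds (supF s C)) := fun s =>
    hsupp (innerₗ _ s)
  -- C is compact
  have hCclosed : IsClosed C := by
    rw [hCdef]
    exact isClosed_biInter fun s _ => isClosed_le (cinner s) continuous_const
  obtain ⟨M, hM⟩ := (isCompact_sphere (0 : EuclideanSpace ℝ (Fin n)) 1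
    ).exists_bound_of_continuousOn hlam
  have hCnorm : ∀ x ∈ C, ‖x‖ ≤ max M 0 := by
    intro x hx
    rcases eq_or_ne x 0 with rfl | hx0
    · simp
    · have hs : (‖x‖⁻¹ • x) ∈ sphere (0 : EuclideanSpace ℝ (Fin n)) 1 := by
        rw [mem_sphere_zero_iff_norm, norm_smul, norm_inv, norm_norm,
          inv_mul_cancel₀ (norm_ne_zero_iff.2 hx0)]
      have hineq : ⟪‖x‖⁻¹ • x, x⟫ ≤ lam (‖x‖⁻¹ • x) := by
        rw [hCdef] at hx
        exact Set.mem_iInter₂.1 hx _ hs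
      have hval : ⟪(‖x‖⁻¹ • x : EuclideanSpace ℝ (Fin n)), x⟫ = ‖x‖ := by
        rw [real_inner_smul_left, real_inner_self_eq_norm_sq, sq]
        field_simp
      have hMx := hM _ hs
      rw [Real.norm_eq_abs] at hMx
      calc ‖x‖ = ⟪(‖x‖⁻¹ • x : EuclideanSpace ℝ (Fin n)), x⟫ := hval.symm
        _ ≤ lam (‖x‖⁻¹ • x) := hineq
        _ ≤ M := (le_abs_self _).trans hMx
        _ ≤ max M 0 := le_max_left _ _
  have hCcomp : IsCompact C := Metric.isCompact_of_isClosed_isBounded hCclosed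
    (isBounded_iff_forall_norm_le.2 ⟨max M 0, hCnorm⟩)
  -- uniform bound R
  set e : Fin n → EuclideanSpace ℝ (Fin n) := fun i => EuclideanSpace.single i (1 : ℝ)
    with he
  have hinnere : ∀ (i : Fin n) (x : EuclideanSpace ℝ (Fin n)), ⟪e i, x⟫ = x i := by
    intro i x
    rw [he]
    simpa using EuclideanSpace.inner_single_left (𝕜 := ℝ) i 1 x
  set R : ℝ := max (∑ i, max (supF (e i) C + 1) (supF (-(e i)) C + 1)) 0 with hR
  have hR0 : (0 : ℝ) ≤ R := le_max_right _ _
  have hRbound : ∀ y : EuclideanSpace ℝ (Fin n),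
      (∀ i : Fin n, ⟪e i, y⟫ ≤ supF (e i) C + 1 ∧ ⟪-(e i), y⟫ ≤ supF (-(e i)) C + 1) →
      ‖y‖ ≤ R := by
    intro y hy
    have h1 : ∀ i : Fin n, |y i| ≤ max (supF (e i) C + 1) (supF (-(e i)) C + 1) := by
      intro i
      obtain ⟨ha, hb⟩ := hy i
      rw [hinnere] at ha
      rw [inner_neg_left, hinnere] at hb
      rw [abs_le]
      constructor
      · linarith [le_max_right (supF (e i) C + 1) (supF (-(e i)) C + 1)]
      · linarith [le_max_left (supF (e i) C + 1) (supF (-(e i)) C + 1)]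
    calc ‖y‖ ≤ ∑ i, |y i| := norm_le_sum_abs y
      _ ≤ ∑ i, max (supF (e i) C + 1) (supF (-(e i)) C + 1) :=
          Finset.sum_le_sum fun i _ => h1 i
      _ ≤ R := le_max_left _ _
  have hCR : ∀ x ∈ C, ‖x‖ ≤ R := fun x hx => hRbound x fun i =>
    ⟨(le_supF hCcomp hx).trans (by linarith), (le_supF hCcomp hx).trans (by linarith)⟩
  have hbound : ∀ᶠ k in atTop, ∀ y ∈ Cseq k, ‖y‖ ≤ R := by
    have hev : ∀ᶠ k in atTop, ∀ i : Fin n,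
        supF (e i) (Cseq k) ≤ supF (e i) C + 1 ∧
        supF (-(e i)) (Cseq k) ≤ supF (-(e i)) C + 1 := by
      rw [eventually_all]
      intro i
      have h1 := (hsupp' (e i)).eventually (eventually_le_nhds (lt_add_one (supF (e i) C)))
      have h2 := (hsupp' (-(e i))).eventually
        (eventually_le_nhds (lt_add_one (supF (-(e i)) C)))
      exact h1.and h2
    filter_upwards [hev] with k hkk y hy
    exact hRbound y fun i => ⟨(le_supF (hcomp' k) hy).trans (hkk i).1,
      (le_supF (hcomp' k) hy).trans (hkk i).2⟩
  -- final: metric convergence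
  rw [Metric.tendsto_nhds]
  intro ε hε
  have hε2 : (0 : ℝ) < ε / 2 := by positivity
  -- Claim 1
  have claim1 : ∀ᶠ k in atTop, ∀ x ∈ Cseq k, infDist x C ≤ ε / 2 := by
    by_contra hcon
    rw [Filter.not_eventually] at hcon
    have hfreq : ∃ᶠ k in atTop, (∃ x ∈ Cseq k, ε / 2 < infDist x C) ∧
        ∀ y ∈ Cseq k, ‖y‖ ≤ R := by
      apply Frequently.and_eventually _ hbound
      refine hcon.mono fun k hk => ?_
      push_neg at hk; exact hk
    obtain ⟨φ, hφmono, hφ⟩ := extraction_of_frequently_atTop hfreq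
    choose x hxmem hxd using fun j => (hφ j).1
    have hxball : ∀ j, x j ∈ closedBall (0 : EuclideanSpace ℝ (Fin n)) R := fun j =>
      mem_closedBall_zero_iff.2 ((hφ j).2 _ (hxmem j))
    obtain ⟨x₀, -, ψ, hψmono, hψtend⟩ :=
      (isCompact_closedBall (0 : EuclideanSpace ℝ (Fin n)) R).tendsto_subseq hxball
    have hx₀d : ε / 2 ≤ infDist x₀ C := by
      have hcont : Tendsto (fun j => infDist (x (ψ j)) C) atTop (nhds (infDist x₀ C)) :=
        ((continuous_infDist_pt C).tendsto x₀).comp hψtend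
      exact ge_of_tendsto hcont (Eventually.of_forall fun j => (hxd (ψ j)).le)
    obtain ⟨s, -, hssep⟩ := sep_lemma hCcomp hne hconv hε2 hx₀d
    have h1 : supF s C ≤ ⟪s, x₀⟫ - ε / 2 := supF_le hne hssep
    have h2 : Tendsto (fun j => supF s (Cseq (φ (ψ j)))) atTop (nhds (supF s C)) :=
      (hsupp' s).comp ((hφmono.comp hψmono).tendsto_atTop)
    have h4 : Tendsto (fun j => ⟪s, x (ψ j)⟫) atTop (nhds ⟪s, x₀⟫) :=
      ((cinner s).tendsto x₀).comp hψtend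
    have h5 : ⟪s, x₀⟫ ≤ supF s C :=
      le_of_tendsto_of_tendsto' h4 h2 fun j => le_supF (hcomp' _) (hxmem (ψ j))
    linarith
  -- Claim 2
  have claim2 : ∀ᶠ k in atTop, ∀ x ∈ C, infDist x (Cseq k) ≤ ε / 2 := by
    by_contra hcon
    rw [Filter.not_eventually] at hcon
    have hfreq : ∃ᶠ k in atTop, (∃ x ∈ C, ε / 2 < infDist x (Cseq k)) ∧
        ∀ y ∈ Cseq k, ‖y‖ ≤ R := by
      apply Frequently.and_eventually _ hbound
      refine hcon.mono fun k hk => ?_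
      push_neg at hk; exact hk
    obtain ⟨φ, hφmono, hφ⟩ := extraction_of_frequently_atTop hfreq
    choose x hxC hxd using fun j => (hφ j).1
    obtain ⟨x₀, hx₀C, ψ, hψmono, hψtend⟩ := hCcomp.tendsto_subseq hxC
    have hε4 : (0 : ℝ) < ε / 4 := by positivity
    have hev : ∀ᶠ j in atTop, ε / 4 ≤ infDist x₀ (Cseq (φ (ψ j))) := by
      have hd : ∀ᶠ j in atTop, dist (x (ψ j)) x₀ < ε / 4 :=
        hψtend.eventually (Metric.ball_mem_nhds x₀ hε4)
      filter_upwards [hd] with j hj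
      have h1 := infDist_le_infDist_add_dist (x := x (ψ j)) (y := x₀)
        (s := Cseq (φ (ψ j)))
      have h2 := hxd (ψ j)
      linarith
    obtain ⟨θ, hθmono, hθ⟩ := extraction_of_frequently_atTop hev.frequently
    choose s hs1 hssep using fun j =>
      sep_lemma (hcomp' (φ (ψ (θ j)))) (hne' _) (hconv' _) hε4 (hθ j)
    have hsph : ∀ j, s j ∈ sphere (0 : EuclideanSpace ℝ (Fin n)) 1 := fun j =>
      mem_sphere_zero_iff_norm.2 (hs1 j)
    obtain ⟨s₀, -, ψ₂, hψ₂mono, hstend⟩ :=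
      (isCompact_sphere (0 : EuclideanSpace ℝ (Fin n)) 1).tendsto_subseq hsph
    have hstend' : Tendsto (fun m => s (ψ₂ m)) atTop (nhds s₀) := hstend
    -- key inequality
    have hkey : ∀ m, supF s₀ (Cseq (φ (ψ (θ (ψ₂ m))))) ≤
        ⟪s (ψ₂ m), x₀⟫ - ε / 4 + ‖s₀ - s (ψ₂ m)‖ * R := by
      intro m
      apply supF_le (hne' _)
      intro y hy
      have h1 : ⟪s (ψ₂ m), y⟫ ≤ ⟪s (ψ₂ m), x₀⟫ - ε / 4 := hssep (ψ₂ m) y hy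
      have h2 : ⟪s₀ - s (ψ₂ m), y⟫ ≤ ‖s₀ - s (ψ₂ m)‖ * R := by
        calc ⟪s₀ - s (ψ₂ m), y⟫ ≤ ‖s₀ - s (ψ₂ m)‖ * ‖y‖ := real_inner_le_norm _ _
          _ ≤ ‖s₀ - s (ψ₂ m)‖ * R :=
            mul_le_mul_of_nonneg_left ((hφ (ψ (θ (ψ₂ m)))).2 y hy) (norm_nonneg _)
      have h3 : ⟪s₀, y⟫ = ⟪s (ψ₂ m), y⟫ + ⟪s₀ - s (ψ₂ m), y⟫ := by
        rw [inner_sub_left]; ring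
      linarith
    -- limits
    have hLHS : Tendsto (fun m => supF s₀ (Cseq (φ (ψ (θ (ψ₂ m)))))) atTop
        (nhds (supF s₀ C)) :=
      (hsupp' s₀).comp (((hφmono.comp hψmono).comp hθmono).comp hψ₂mono).tendsto_atTop
    have hnorm0 : Tendsto (fun m => ‖s₀ - s (ψ₂ m)‖) atTop (nhds 0) := by
      have h := (tendsto_const_nhds (x := s₀) (f := atTop)).sub hstend'
      simpa using h.norm
    have hRHS : Tendsto (fun m => ⟪s (ψ₂ m), x₀⟫ - ε / 4 + ‖s₀ - s (ψ₂ m)‖ * R)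
        atTop (nhds (⟪s₀, x₀⟫ - ε / 4 + 0 * R)) := by
      apply Tendsto.add
      · exact (((continuous_id.inner continuous_const).tendsto s₀).comp hstend').sub
          tendsto_const_nhds
      · exact hnorm0.mul tendsto_const_nhds
    have hfin : supF s₀ C ≤ ⟪s₀, x₀⟫ - ε / 4 + 0 * R :=
      le_of_tendsto_of_tendsto' hLHS hRHS hkey
    have hx₀le : ⟪s₀, x₀⟫ ≤ supF s₀ C := le_supF hCcomp hx₀C
    rw [zero_mul, add_zero] at hfin
    linarith
  -- combine
  filter_upwards [claim1, claim2] with k h1 h2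
  rw [Real.dist_eq, sub_zero, abs_of_nonneg hausdorffDist_nonneg]
  calc hausdorffDist (Cseq k) C ≤ ε / 2 := hausdorffDist_le_of_infDist hε2.le h1 h2
    _ < ε := by linarith
end

section
/- Let Z₁, …, Z_m be i.i.d. random variables with values in a set D and let g : D^m → ℝ satisfy the bounded differences condition: changing any single argument changes g by at most C. Then for all ε > 0, P[g(Z₁,…,Z_m) − E[g(Z₁,…,Z_m)] ≥ εm] ≤ exp(−2ε²m/C²), and the same bound holds for the lower deviation P[E[g] − g ≥ εm]. -/
/-!
Induction on the number of coordinates, peeling off the first one. Fix the other coordinates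
`w`: as a function of the first coordinate `x`, `g (x, w)` has oscillation at most `C`, so by
Hoeffding's lemma its deviation from the partial mean `h w = ∫ g (x, w) dμ(x)` is sub-Gaussian
with variance proxy `C² / 4`. The partial mean `h` again has bounded differences `C` in the
remaining `m` coordinates, so by induction `h - E h` is sub-Gaussian with proxy `m C² / 4`.
Fubini multiplies the two moment-generating-function bounds, so `g - E g` is sub-Gaussian with
proxy `(m + 1) C² / 4`, and the Chernoff bound gives `exp (-(ε m)² / (2 m C² / 4))`.
The lower tail is the upper tail of `-g`.
-/

open MeasureTheory ProbabilityTheory Real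
open scoped NNReal

lemma measurable_finCons {α : Type*} [MeasurableSpace α] {m : ℕ} :
    Measurable fun p : α × (Fin m → α) => (Fin.cons p.1 p.2 : Fin (m + 1) → α) :=
  measurable_pi_lambda _ fun j => Fin.cases measurable_fst
    (fun j => (measurable_pi_apply j).comp measurable_snd) j

def HasBoundedDifferences {ι α : Type*} [DecidableEq ι] (g : (ι → α) → ℝ) (C : ℝ) : Prop :=
  ∀ (z : ι → α) (i : ι) (a : α), |g z - g (Function.update z i a)| ≤ C

namespace HasBoundedDifferences

section

variable {ι α : Type*} [DecidableEq ι] {g : (ι → α) → ℝ} {C : ℝ}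

lemma abs_sub_le_card_mul [Fintype ι] (hg : HasBoundedDifferences g C) (z z' : ι → α) :
    |g z - g z'| ≤ Fintype.card ι * C := by
  suffices ∀ s : Finset ι, ∀ z, (∀ i ∉ s, z i = z' i) → |g z - g z'| ≤ s.card * C by
    simpa using this Finset.univ z (by simp)
  intro s
  induction s using Finset.induction with
  | empty =>
    intro z hz
    simp [funext fun i => hz i (Finset.notMem_empty i)]
  | insert i s hi ih =>
    intro z hz
    set y := Function.update z i (z' i)
    have hy : ∀ j ∉ s, y j = z' j := by
      intro j hj
      rcases eq_or_ne j i with rfl | hji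
      · simp [y]
      · simp only [y, Function.update_of_ne hji]
        exact hz j (by simp [hji, hj])
    calc |g z - g z'| ≤ |g z - g y| + |g y - g z'| := abs_sub_le _ _ _
      _ ≤ C + s.card * C := add_le_add (hg z i (z' i)) (ih y hy)
      _ = (insert i s).card * C := by
        rw [Finset.card_insert_of_notMem hi]; push_cast; ring

lemma exists_forall_abs_le [Fintype ι] [Nonempty α] (hg : HasBoundedDifferences g C) :
    ∃ K, ∀ z, |g z| ≤ K := by
  obtain ⟨a⟩ := ‹Nonempty α›
  refine ⟨|g fun _ => a| + Fintype.card ι * C, fun z => ?_⟩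
  have := hg.abs_sub_le_card_mul z fun _ => a
  have := abs_sub_abs_le_abs_sub (g z) (g fun _ => a)
  linarith

end

variable {α : Type*} {m : ℕ} {g : (Fin (m + 1) → α) → ℝ} {C : ℝ}

lemma abs_cons_sub_cons_le (hg : HasBoundedDifferences g C) (w : Fin m → α) (x y : α) :
    |g (Fin.cons x w) - g (Fin.cons y w)| ≤ C := by
  simpa [Fin.update_cons_zero] using hg (Fin.cons x w) 0 y

lemma integral_cons [MeasurableSpace α] {μ : Measure α} [IsProbabilityMeasure μ]
    (hg : HasBoundedDifferences g C) (hgm : Measurable g) :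
    HasBoundedDifferences (fun w => ∫ x, g (Fin.cons x w) ∂μ) C := by
  intro w i a
  have := nonempty_of_isProbabilityMeasure μ
  obtain ⟨K, hK⟩ := hg.exists_forall_abs_le
  have hint (w : Fin m → α) : Integrable (fun x => g (Fin.cons x w)) μ :=
    .of_bound (hgm.comp (measurable_finCons.comp measurable_prodMk_right)).aestronglyMeasurable K
      (ae_of_all _ fun x => hK _)
  rw [← integral_sub (hint w) (hint _)]
  have hpt : ∀ x, ‖g (Fin.cons x w) - g (Fin.cons x (Function.update w i a))‖ ≤ C := fun x => by
    rw [Real.norm_eq_abs, Fin.cons_update]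
    exact hg (Fin.cons x w) i.succ a
  simpa using norm_integral_le_of_norm_le_const (μ := μ) (ae_of_all _ hpt)

end HasBoundedDifferences

section Subgaussian

variable {Ω : Type*} [MeasurableSpace Ω] {μ : Measure Ω} [IsProbabilityMeasure μ]

lemma hasSubgaussianMGF_sub_integral_of_abs_sub_le {X : Ω → ℝ} (hX : Measurable X) {C : ℝ}
    (hC : ∀ x y, |X x - X y| ≤ C) :
    HasSubgaussianMGF (fun ω => X ω - μ[X]) ((‖C‖₊ / 2) ^ 2) μ := by
  have : Nonempty Ω := nonempty_of_isProbabilityMeasure μ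
  inhabit Ω
  have hbdd : BddBelow (Set.range X) := by
    refine ⟨X default - C, ?_⟩
    rintro _ ⟨ω, rfl⟩
    linarith [(abs_le.1 (hC default ω)).2]
  have hmem : ∀ ω, X ω ∈ Set.Icc (⨅ ω, X ω) ((⨅ ω, X ω) + C) := by
    intro ω
    have : X ω - C ≤ ⨅ ω, X ω := le_ciInf fun ω' => by linarith [(abs_le.1 (hC ω ω')).2]
    exact ⟨ciInf_le hbdd ω, by linarith⟩
  simpa using hasSubgaussianMGF_of_mem_Icc hX.aemeasurable (ae_of_all _ hmem)

variable {β : Type*} [MeasurableSpace β] {ν : Measure β} [IsProbabilityMeasure ν]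

lemma hasSubgaussianMGF_sub_integral_prod {F : Ω × β → ℝ} (hF : Measurable F) {K : ℝ}
    (hFK : ∀ p, |F p| ≤ K) {c₁ c₂ : ℝ≥0}
    (h₁ : ∀ w, HasSubgaussianMGF (fun x => F (x, w) - ∫ x', F (x', w) ∂μ) c₁ μ)
    (h₂ : HasSubgaussianMGF (fun w => ∫ x, F (x, w) ∂μ - ∫ w', ∫ x, F (x, w') ∂μ ∂ν) c₂ ν) :
    HasSubgaussianMGF (fun p => F p - ∫ p, F p ∂(μ.prod ν)) (c₁ + c₂) (μ.prod ν) := by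
  set I := ∫ p, F p ∂(μ.prod ν)
  set h := fun w => ∫ x, F (x, w) ∂μ
  have hI : I = ∫ w, h w ∂ν :=
    integral_prod_symm F (.of_bound hF.aestronglyMeasurable K (ae_of_all _ hFK))
  have hint (t : ℝ) : Integrable (fun p => exp (t * (F p - I))) (μ.prod ν) :=
    integrable_exp_mul_of_mem_Icc (a := -K - I) (b := K - I) (hF.sub_const I).aemeasurable
      (ae_of_all _ fun p => by have := abs_le.1 (hFK p); constructor <;> linarith)
  refine ⟨hint, fun t => ?_⟩
  have hsplit (x w) :
      exp (t * (F (x, w) - I)) = exp (t * (h w - I)) * exp (t * (F (x, w) - h w)) := by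
    rw [← exp_add]; congr 1; ring
  calc mgf (fun p => F p - I) (μ.prod ν) t
      = ∫ w, ∫ x, exp (t * (F (x, w) - I)) ∂μ ∂ν := integral_prod_symm _ (hint t)
    _ = ∫ w, exp (t * (h w - I)) * mgf (fun x => F (x, w) - h w) μ t ∂ν := by
      simp_rw [hsplit, integral_const_mul]; rfl
    _ ≤ ∫ w, exp (t * (h w - I)) * exp (c₁ * t ^ 2 / 2) ∂ν := by
      refine integral_mono_of_nonneg (ae_of_all _ fun w => mul_nonneg (exp_pos _).le mgf_nonneg) ?_
        (ae_of_all _ fun w => mul_le_mul_of_nonneg_left ((h₁ w).mgf_le t) (exp_pos _).le)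
      rw [hI]
      exact (h₂.integrable_exp_mul t).mul_const _
    _ = mgf (fun w => h w - I) ν t * exp (c₁ * t ^ 2 / 2) := integral_mul_const _ _
    _ ≤ exp (c₂ * t ^ 2 / 2) * exp (c₁ * t ^ 2 / 2) := by
      gcongr
      rw [hI]
      exact h₂.mgf_le t
    _ = exp (↑(c₁ + c₂) * t ^ 2 / 2) := by rw [← exp_add]; congr 1; push_cast; ring

end Subgaussian

section Pi

variable {D : Type*} [MeasurableSpace D]

lemma MeasurableEquiv.piFinSuccAbove_zero_symm_apply {m : ℕ} (p : D × (Fin m → D)) :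
    (MeasurableEquiv.piFinSuccAbove (fun _ : Fin (m + 1) => D) 0).symm p = Fin.cons p.1 p.2 := by
  simp only [MeasurableEquiv.piFinSuccAbove_symm_apply, Fin.insertNthEquiv_zero]
  rfl

theorem HasBoundedDifferences.hasSubgaussianMGF_pi (μ : Measure D) [IsProbabilityMeasure μ]
    {C : ℝ} {m : ℕ} {g : (Fin m → D) → ℝ} (hgm : Measurable g) (hg : HasBoundedDifferences g C) :
    HasSubgaussianMGF (fun z => g z - ∫ w, g w ∂(Measure.pi fun _ => μ))
      (m * (‖C‖₊ / 2) ^ 2) (Measure.pi fun _ => μ) := by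
  induction m with
  | zero =>
    have hconst : ∀ z, g z - ∫ w, g w ∂(Measure.pi fun _ => μ) = 0 := fun z => by
      simp [Subsingleton.elim _ z]
    simp [hconst]
  | succ m ih =>
    have : Nonempty D := nonempty_of_isProbabilityMeasure μ
    set e := MeasurableEquiv.piFinSuccAbove (fun _ : Fin (m + 1) => D) 0
    have he : MeasurePreserving e (Measure.pi fun _ => μ) (μ.prod (Measure.pi fun _ => μ)) :=
      measurePreserving_piFinSuccAbove (fun _ => μ) 0
    set F : D × (Fin m → D) → ℝ := fun p => g (Fin.cons p.1 p.2)
    have hF : Measurable F := hgm.comp measurable_finCons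
    obtain ⟨K, hK⟩ := hg.exists_forall_abs_le
    have hFsub := hasSubgaussianMGF_sub_integral_prod (μ := μ) hF (fun p => hK _)
      (fun w => hasSubgaussianMGF_sub_integral_of_abs_sub_le
        (hF.comp (measurable_id.prodMk measurable_const)) (hg.abs_cons_sub_cons_le w))
      (ih (hF.stronglyMeasurable.integral_prod_left').measurable (hg.integral_cons (μ := μ) hgm))
    have hFe (z : Fin (m + 1) → D) : F (e z) = g z := by
      simp only [F, ← MeasurableEquiv.piFinSuccAbove_zero_symm_apply]
      exact congrArg g (e.symm_apply_apply z)
    have hgF : (fun z => g z - ∫ w, g w ∂(Measure.pi fun _ => μ))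
        = (fun p => F p - ∫ p, F p ∂(μ.prod (Measure.pi fun _ => μ))) ∘ e := by
      ext z
      simp only [Function.comp_apply, hFe, ← he.integral_comp' F]
    rw [hgF]
    refine HasSubgaussianMGF.of_map e.measurable.aemeasurable ?_
    rw [he.map_eq]
    convert hFsub using 1
    push_cast
    ring

end Pi

/-- McDiarmid's inequality: if `Z₁, …, Z_m` are i.i.d. with common distribution `μ`
(modelled by the product measure on `Fin m → D`) and `g` satisfies the bounded differences
condition with constant `C`, then both the upper and lower deviations of `g` from its mean
by `ε·m` have probability at most `exp(-2ε²m/C²)`. -/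
theorem stmt_19 {D : Type*} [MeasurableSpace D] (μ : Measure D) [IsProbabilityMeasure μ]
    (m : ℕ) (g : (Fin m → D) → ℝ) (hg : Measurable g) (C : ℝ)
    (hC : ∀ (z : Fin m → D) (i : Fin m) (zi : D),
      |g z - g (Function.update z i zi)| ≤ C)
    (ε : ℝ) (hε : 0 < ε) :
    (Measure.pi fun _ : Fin m => μ)
        {z : Fin m → D | (∫ w, g w ∂(Measure.pi fun _ : Fin m => μ)) + ε * m ≤ g z} ≤
      ENNReal.ofReal (Real.exp (-(2 * ε ^ 2 * m) / C ^ 2)) ∧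
    (Measure.pi fun _ : Fin m => μ)
        {z : Fin m → D | g z ≤ (∫ w, g w ∂(Measure.pi fun _ : Fin m => μ)) - ε * m} ≤
      ENNReal.ofReal (Real.exp (-(2 * ε ^ 2 * m) / C ^ 2)) := by
  set P := Measure.pi fun _ : Fin m => μ
  set c : ℝ≥0 := m * (‖C‖₊ / 2) ^ 2
  -- Both sides are `0` when `m = 0` or `C = 0`, the latter by division by zero.
  have hc : -(ε * m) ^ 2 / (2 * c) = -(2 * ε ^ 2 * m) / C ^ 2 := by
    rcases eq_or_ne (m : ℝ) 0 with hm | hm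
    · simp [c, hm]
    rcases eq_or_ne C 0 with hC0 | hC0
    · simp [c, hC0]
    simp only [c, NNReal.coe_mul, NNReal.coe_natCast, NNReal.coe_pow, NNReal.coe_div, coe_nnnorm,
      Real.norm_eq_abs, NNReal.coe_ofNat]
    field_simp
    rw [sq_abs]
  have htail {X : (Fin m → D) → ℝ} (hX : HasSubgaussianMGF X c P) :
      P {z | ε * m ≤ X z} ≤ ENNReal.ofReal (exp (-(2 * ε ^ 2 * m) / C ^ 2)) := by
    rw [← ofReal_measureReal, ← hc]
    exact ENNReal.ofReal_le_ofReal (hX.measure_ge_le (by positivity))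
  have hdev := HasBoundedDifferences.hasSubgaussianMGF_pi μ hg hC
  constructor
  · refine (measure_mono fun z hz => ?_).trans (htail hdev)
    simp only [Set.mem_ofPred_eq] at hz ⊢
    linarith
  · refine (measure_mono fun z hz => ?_).trans (htail hdev.neg)
    simp only [Set.mem_ofPred_eq, Pi.neg_apply] at hz ⊢
    linarith
end
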